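/- Let μ ∈ M(ℝ) with 0 ∈ Θ(μ), let α > 0 with [−α, α] ⊂ Θ(μ), and let z ↦ ψ₁(z), k₁ be analytic extensions of ψ_μ, k_μ to complex domains such that ψ₁ maps a disk D(m₀, r) into D(0, α/3). Then the map z ↦ f₁(·, z) = exp(ψ₁(z)·x − k₁(ψ₁(z))) from D(m₀, r) into L²(μ) is well defined (each f₁(·,z) is square-integrable) and complex differentiable, hence analytic. -/

import Mathlib

open MeasureTheory Complex Metric
open scoped ENNReal NNReal

section NefAux

lemma norm_exp_le_of_mem {R : ℝ} {v : ℂ} (hv : v ∈ closedBall (0:ℂ) R) :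
    ‖Complex.exp v‖ ≤ Real.exp R := by
  rw [Complex.norm_exp]
  have h1 : v.re ≤ ‖v‖ := (v.abs_re_le_norm).trans' (le_abs_self _)
  have h2 : ‖v‖ ≤ R := mem_closedBall_zero_iff.1 hv
  exact Real.exp_le_exp.2 (h1.trans h2)

lemma exp_sub_one_norm_le (u : ℂ) {R : ℝ} (hR : 0 ≤ R) (hu : ‖u‖ ≤ R) :
    ‖Complex.exp u - 1‖ ≤ Real.exp R * ‖u‖ := by
  have hconv : Convex ℝ (closedBall (0:ℂ) R) := convex_closedBall _ _
  have h := hconv.norm_image_sub_le_of_norm_hasDerivWithin_le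
      (f := Complex.exp) (f' := Complex.exp) (C := Real.exp R) (x := (0:ℂ)) (y := u)
      (fun v _ => (Complex.hasDerivAt_exp v).hasDerivWithinAt)
      (fun v hv => norm_exp_le_of_mem hv)
      (mem_closedBall_zero_iff.2 (by simpa using hR))
      (mem_closedBall_zero_iff.2 hu)
  simpa using h

lemma exp_remainder_bound (u : ℂ) : ‖Complex.exp u - 1 - u‖ ≤ ‖u‖^2 * Real.exp ‖u‖ := by
  have hconv : Convex ℝ (closedBall (0:ℂ) ‖u‖) := convex_closedBall _ _
  have h := hconv.norm_image_sub_le_of_norm_hasDerivWithin_le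
      (f := fun v => Complex.exp v - v) (f' := fun v => Complex.exp v - 1)
      (C := Real.exp ‖u‖ * ‖u‖) (x := (0:ℂ)) (y := u)
      (fun v _ => ((Complex.hasDerivAt_exp v).sub (hasDerivAt_id v)).hasDerivWithinAt)
      (fun v hv => by
        have h1 := exp_sub_one_norm_le v (norm_nonneg u) (mem_closedBall_zero_iff.1 hv)
        exact h1.trans (by
          have := mem_closedBall_zero_iff.1 hv
          nlinarith [Real.exp_nonneg ‖u‖, Real.exp_pos ‖u‖]))
      (mem_closedBall_zero_iff.2 (by simp))
      (mem_closedBall_zero_iff.2 (le_refl _))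
  simp only [Complex.exp_zero, sub_zero] at h
  calc ‖Complex.exp u - 1 - u‖ = ‖Complex.exp u - u - 1‖ := by ring_nf
    _ ≤ Real.exp ‖u‖ * ‖u‖ * ‖u‖ := h
    _ = ‖u‖^2 * Real.exp ‖u‖ := by ring

variable {μ : Measure ℝ} [IsProbabilityMeasure μ] {α : ℝ}

omit [IsProbabilityMeasure μ] in
lemma integrable_exp_lin (hint : ∀ θ : ℝ, |θ| ≤ α → Integrable (fun x => Real.exp (θ * x)) μ)
    {c γ : ℝ} (hγ : 0 ≤ γ) (h : |c| + γ ≤ α) :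
    Integrable (fun x : ℝ => Real.exp (c * x + γ * |x|)) μ := by
  have h1 : Integrable (fun x => Real.exp ((c + γ) * x)) μ :=
    hint _ (by cases abs_cases c with | inl hc => cases abs_cases (c+γ) <;> linarith [hc.1]
                                      | inr hc => cases abs_cases (c+γ) <;> linarith [hc.1])
  have h2 : Integrable (fun x => Real.exp ((c - γ) * x)) μ :=
    hint _ (by cases abs_cases c with | inl hc => cases abs_cases (c-γ) <;> linarith [hc.1]
                                      | inr hc => cases abs_cases (c-γ) <;> linarith [hc.1])
  refine (h1.add h2).mono' ?_ ?_
  · apply Continuous.aestronglyMeasurable; fun_prop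
  · filter_upwards with x
    rw [Real.norm_eq_abs, _root_.abs_of_nonneg (Real.exp_nonneg _)]
    rcases abs_cases x with ⟨hx, _⟩ | ⟨hx, _⟩
    · rw [hx]
      have : c * x + γ * x = (c + γ) * x := by ring
      rw [this]
      exact le_add_of_nonneg_right (Real.exp_nonneg _)
    · rw [hx]
      have : c * x + γ * -x = (c - γ) * x := by ring
      rw [this]
      exact le_add_of_nonneg_left (Real.exp_nonneg _)

omit [IsProbabilityMeasure μ] in
lemma integrable_pow_exp (hint : ∀ θ : ℝ, |θ| ≤ α → Integrable (fun x => Real.exp (θ * x)) μ)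
    (n : ℕ) {c γ ε : ℝ} (hγ : 0 ≤ γ) (hε : 0 < ε) (h : |c| + γ + ε ≤ α) :
    Integrable (fun x : ℝ => |x| ^ n * Real.exp (c * x + γ * |x|)) μ := by
  have key : Integrable (fun x : ℝ => Real.exp (c * x + (γ + ε) * |x|)) μ :=
    integrable_exp_lin hint (by linarith) (by linarith)
  refine ((key.const_mul ((Nat.factorial n : ℝ) / ε ^ n)).mono' ?_ ?_)
  · apply Continuous.aestronglyMeasurable; fun_prop
  · filter_upwards with x
    have hfac : (0:ℝ) < (Nat.factorial n : ℝ) := by positivity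
    have h1 : (ε * |x|) ^ n / (Nat.factorial n : ℝ) ≤ Real.exp (ε * |x|) :=
      Real.pow_div_factorial_le_exp _ (by positivity) n
    have h2 : ε ^ n * |x| ^ n ≤ (Nat.factorial n : ℝ) * Real.exp (ε * |x|) := by
      rw [div_le_iff₀ hfac] at h1; rw [← mul_pow]; linarith
    have h3 : |x| ^ n ≤ (Nat.factorial n : ℝ) / ε ^ n * Real.exp (ε * |x|) := by
      rw [div_mul_eq_mul_div, le_div_iff₀ (by positivity : (0:ℝ) < ε ^ n)]
      linarith
    have h4 : Real.exp (c * x + (γ + ε) * |x|)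
        = Real.exp (ε * |x|) * Real.exp (c * x + γ * |x|) := by
      rw [← Real.exp_add]; ring_nf
    rw [Real.norm_eq_abs, _root_.abs_of_nonneg (by positivity), h4, ← mul_assoc]
    exact mul_le_mul_of_nonneg_right h3 (Real.exp_nonneg _)

omit [IsProbabilityMeasure μ] in
lemma memLp_exp (hint : ∀ θ : ℝ, |θ| ≤ α → Integrable (fun x => Real.exp (θ * x)) μ)
    (hα : 0 < α) {w : ℂ} (hw : ‖w‖ < α/3) :
    MemLp (fun x : ℝ => Complex.exp (w * x)) 2 μ := by
  refine (memLp_two_iff_integrable_sq_norm ?_).2 ?_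
  · apply Continuous.aestronglyMeasurable; fun_prop
  · have heq : (fun x : ℝ => ‖Complex.exp (w * x)‖^2) = fun x : ℝ => Real.exp ((2*w.re) * x) := by
      funext x
      rw [Complex.norm_exp, sq, ← Real.exp_add]
      congr 1
      simp [Complex.mul_re]
      ring
    rw [heq]
    refine hint _ ?_
    have h2 : |w.re| ≤ ‖w‖ := by exact Complex.abs_re_le_norm w
    rw [abs_mul, _root_.abs_two]
    linarith [abs_nonneg w.re]

omit [IsProbabilityMeasure μ] in
lemma memLp_mul_exp (hint : ∀ θ : ℝ, |θ| ≤ α → Integrable (fun x => Real.exp (θ * x)) μ)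
    (hα : 0 < α) {w : ℂ} (hw : ‖w‖ < α/3) :
    MemLp (fun x : ℝ => (x : ℂ) * Complex.exp (w * x)) 2 μ := by
  refine (memLp_two_iff_integrable_sq_norm ?_).2 ?_
  · apply Continuous.aestronglyMeasurable; fun_prop
  · have heq : (fun x : ℝ => ‖(x : ℂ) * Complex.exp (w * x)‖^2)
        = fun x : ℝ => |x|^2 * Real.exp ((2*w.re) * x + 0 * |x|) := by
      funext x
      rw [norm_mul, mul_pow, Complex.norm_real, Real.norm_eq_abs,
        Complex.norm_exp, sq (Real.exp _), ← Real.exp_add]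
      congr 2
      simp [Complex.mul_re]
      ring
    rw [heq]
    refine integrable_pow_exp hint 2 (ε := α/3) le_rfl (by linarith) ?_
    have h2 : |w.re| ≤ ‖w‖ := by exact Complex.abs_re_le_norm w
    rw [abs_mul, _root_.abs_two]
    linarith [abs_nonneg w.re]

omit [IsProbabilityMeasure μ] in
lemma memLp_G (hint : ∀ θ : ℝ, |θ| ≤ α → Integrable (fun x => Real.exp (θ * x)) μ)
    (hα : 0 < α) {w : ℂ} (hw : ‖w‖ < α/3) :
    MemLp (fun x : ℝ => x^2 * Real.exp (w.re * x + (α/24) * |x|)) 2 μ := by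
  refine (memLp_two_iff_integrable_sq_norm ?_).2 ?_
  · apply Continuous.aestronglyMeasurable; fun_prop
  · have heq : (fun x : ℝ => ‖x^2 * Real.exp (w.re * x + (α/24) * |x|)‖^2)
        = fun x : ℝ => |x|^4 * Real.exp ((2*w.re) * x + (α/12) * |x|) := by
      funext x
      rw [Real.norm_eq_abs, _root_.abs_of_nonneg (by positivity), mul_pow, ← pow_mul,
        sq (Real.exp _), ← Real.exp_add]
      have hx4 : |x|^4 = x^(2*2) := by
        rw [pow_abs, _root_.abs_of_nonneg (by positivity)]
      rw [← hx4]
      congr 1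
      ring
    rw [heq]
    refine integrable_pow_exp hint 4 (ε := α/6) (by linarith) (by linarith) ?_
    have h2 : |w.re| ≤ ‖w‖ := by exact Complex.abs_re_le_norm w
    rw [abs_mul, _root_.abs_two]
    linarith [abs_nonneg w.re]

open Classical in
/-- The map `w ↦ (x ↦ exp (w x))` into `L²(μ)`, defined as `0` when not square-integrable. -/
noncomputable def expL2 (μ : Measure ℝ) (w : ℂ) : Lp ℂ 2 μ :=
  if h : MemLp (fun x : ℝ => Complex.exp (w * x)) 2 μ then h.toLp _ else 0

lemma differentiableAt_expL2
    (hint : ∀ θ : ℝ, |θ| ≤ α → Integrable (fun x => Real.exp (θ * x)) μ)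
    (hα : 0 < α) {w : ℂ} (hw : ‖w‖ < α/3) :
    DifferentiableAt ℂ (expL2 μ) w := by
  have hwmem := memLp_exp hint hα hw
  have hd := memLp_mul_exp hint hα hw
  have hG : MemLp (fun x : ℝ => x^2 * Real.exp (w.re * x + (α/24) * |x|)) 2 μ :=
    memLp_G hint hα hw
  set G : ℝ → ℝ := fun x => x^2 * Real.exp (w.re * x + (α/24) * |x|) with hGdef
  set M : ℝ := (eLpNorm G 2 μ).toReal with hMdef
  have hM0 : 0 ≤ M := ENNReal.toReal_nonneg
  refine HasDerivAt.differentiableAt (f' := hd.toLp _) (hasDerivAt_iff_isLittleO.2 ?_)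
  rw [Asymptotics.isLittleO_iff]
  intro c hc
  have hmin : 0 < min (α/24) (c/(M+1)) := lt_min (by linarith) (by positivity)
  have h1 : ∀ᶠ w' in nhds w, w' ∈ ball w (min (α/24) (c/(M+1))) :=
    isOpen_ball.eventually_mem (mem_ball_self hmin)
  have h2 : ∀ᶠ w' in nhds w, w' ∈ ball (0:ℂ) (α/3) :=
    isOpen_ball.eventually_mem (mem_ball_zero_iff.2 hw)
  filter_upwards [h1, h2] with w' hw1 hw2
  have hw' : ‖w'‖ < α/3 := mem_ball_zero_iff.1 hw2
  have hw'mem := memLp_exp hint hα hw'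
  have hhsmall : ‖w' - w‖ ≤ α/24 :=
    le_of_lt ((mem_ball_iff_norm.1 hw1).trans_le (min_le_left _ _))
  have hhc : ‖w' - w‖ ≤ c/(M+1) :=
    le_of_lt ((mem_ball_iff_norm.1 hw1).trans_le (min_le_right _ _))
  have e1 : expL2 μ w' = hw'mem.toLp _ := dif_pos hw'mem
  have e2 : expL2 μ w = hwmem.toLp _ := dif_pos hwmem
  set F : ℝ → ℂ := fun x => Complex.exp (w' * x) - Complex.exp (w * x)
      - (w' - w) • ((x:ℂ) * Complex.exp (w * x)) with hFdef
  have hXcoe : ⇑(expL2 μ w' - expL2 μ w - (w' - w) • (hd.toLp _)) =ᵐ[μ] F := by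
    rw [e1, e2]
    filter_upwards [Lp.coeFn_sub (hw'mem.toLp _ - hwmem.toLp _) ((w' - w) • hd.toLp _),
      Lp.coeFn_sub (hw'mem.toLp _) (hwmem.toLp _),
      Lp.coeFn_smul (w' - w) (hd.toLp _),
      hw'mem.coeFn_toLp, hwmem.coeFn_toLp, hd.coeFn_toLp] with x a1 a2 a3 a4 a5 a6
    rw [hFdef]
    simp only [Pi.sub_apply, Pi.smul_apply] at a1 a2 a3 ⊢
    rw [a1, a2, a3, a4, a5, a6]
  rw [Lp.norm_def, eLpNorm_congr_ae hXcoe]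
  have hpt : ∀ x : ℝ, ‖F x‖ ≤ ‖(‖w' - w‖^2 • G) x‖ := by
    intro x
    have hfac : F x = Complex.exp (w * x)
        * (Complex.exp ((w' - w) * x) - 1 - (w' - w) * x) := by
      have hsplit : (w' : ℂ) * x = w * x + (w' - w) * x := by ring
      rw [hFdef]
      simp only [smul_eq_mul]
      rw [hsplit, Complex.exp_add]
      ring
    rw [hfac, norm_mul]
    have hb := exp_remainder_bound ((w' - w) * x)
    have hnx : ‖((w' - w) : ℂ) * x‖ = ‖w' - w‖ * |x| := by
      rw [norm_mul, Complex.norm_real, Real.norm_eq_abs]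
    have hbound2 : ‖Complex.exp ((w' - w) * x) - 1 - (w' - w) * x‖
        ≤ ‖w' - w‖^2 * x^2 * Real.exp ((α/24) * |x|) := by
      refine hb.trans ?_
      rw [hnx]
      have hexp : Real.exp (‖w' - w‖ * |x|) ≤ Real.exp ((α/24) * |x|) :=
        Real.exp_le_exp.2 (mul_le_mul_of_nonneg_right hhsmall (abs_nonneg x))
      have hsq : (‖w' - w‖ * |x|)^2 = ‖w' - w‖^2 * x^2 := by
        rw [mul_pow, _root_.sq_abs]
      rw [hsq]
      exact mul_le_mul_of_nonneg_left hexp (by positivity)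
    have hnormexp : ‖Complex.exp (w * x)‖ = Real.exp (w.re * x) := by
      rw [Complex.norm_exp]
      congr 1
      simp [Complex.mul_re]
    have hGx : (0:ℝ) ≤ G x := by rw [hGdef]; positivity
    have : ‖Complex.exp (w * x)‖ * ‖Complex.exp ((w' - w) * x) - 1 - (w' - w) * x‖
        ≤ ‖w' - w‖^2 * G x := by
      rw [hnormexp, hGdef]
      calc Real.exp (w.re * x) * ‖Complex.exp ((w' - w) * x) - 1 - (w' - w) * x‖
          ≤ Real.exp (w.re * x) * (‖w' - w‖^2 * x^2 * Real.exp ((α/24) * |x|)) :=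
            mul_le_mul_of_nonneg_left hbound2 (Real.exp_nonneg _)
        _ = ‖w' - w‖^2 * (x^2 * Real.exp (w.re * x + (α/24) * |x|)) := by
            rw [Real.exp_add]; ring
    refine this.trans ?_
    rw [Pi.smul_apply, smul_eq_mul, Real.norm_eq_abs]
    exact le_abs_self _
  have hle : eLpNorm F 2 μ ≤ eLpNorm ((‖w' - w‖^2 : ℝ) • G) 2 μ := eLpNorm_mono hpt
  have hsmul : eLpNorm ((‖w' - w‖^2 : ℝ) • G) 2 μ
      = (‖(‖w' - w‖^2 : ℝ)‖₊ : ℝ≥0∞) * eLpNorm G 2 μ :=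
    eLpNorm_const_smul (‖w' - w‖^2 : ℝ) G 2 μ
  have hfin : (‖(‖w' - w‖^2 : ℝ)‖₊ : ℝ≥0∞) * eLpNorm G 2 μ ≠ ⊤ :=
    ENNReal.mul_ne_top (by simp) hG.2.ne
  have htr : (eLpNorm F 2 μ).toReal ≤ ‖w' - w‖^2 * M := by
    have hle2 : eLpNorm F 2 μ ≤ (‖(‖w' - w‖^2 : ℝ)‖₊ : ℝ≥0∞) * eLpNorm G 2 μ :=
      hle.trans_eq hsmul
    refine (ENNReal.toReal_mono hfin hle2).trans_eq ?_
    rw [ENNReal.toReal_mul, ENNReal.coe_toReal, coe_nnnorm, Real.norm_eq_abs,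
      _root_.abs_of_nonneg (by positivity), ← hMdef]
  refine htr.trans ?_
  have hMle : ‖w' - w‖ * (M + 1) ≤ c := by
    rw [← le_div_iff₀ (by positivity : (0:ℝ) < M + 1)]
    exact hhc
  nlinarith [norm_nonneg (w' - w), sq_nonneg (‖w' - w‖)]

end NefAux

/-- Section 5: if `μ` has finite Laplace transform on `[−α, α]` and `ψ₁`, `k₁` are
analytic extensions with `ψ₁` mapping the disk `D(m₀,r)` into `D(0, α/3)`, then
`z ↦ f₁(·,z) = exp(ψ₁(z)·x − k₁(ψ₁(z)))` is a well-defined and complex differentiable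
(hence analytic) map from `D(m₀,r)` into `L²(μ)`. -/
theorem nefDensity_analytic_into_L2 (μ : Measure ℝ) [IsProbabilityMeasure μ]
    (α : ℝ) (hα : 0 < α)
    (hint : ∀ θ : ℝ, |θ| ≤ α → Integrable (fun x => Real.exp (θ * x)) μ)
    (m₀ : ℂ) (r : ℝ) (hr : 0 < r)
    (ψ₁ k₁ : ℂ → ℂ)
    (hψ₁ : DifferentiableOn ℂ ψ₁ (ball m₀ r))
    (hk₁ : DifferentiableOn ℂ k₁ (ball 0 (α / 3)))
    (hmap : Set.MapsTo ψ₁ (ball m₀ r) (ball 0 (α / 3))) :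
    (∀ z ∈ ball m₀ r,
      MemLp (fun x : ℝ => Complex.exp (ψ₁ z * x - k₁ (ψ₁ z))) 2 μ)
    ∧ ∃ φ : ℂ → Lp ℂ 2 μ,
        (∀ z ∈ ball m₀ r,
          (φ z : ℝ → ℂ) =ᵐ[μ] fun x : ℝ => Complex.exp (ψ₁ z * x - k₁ (ψ₁ z)))
        ∧ DifferentiableOn ℂ φ (ball m₀ r) := by
  have hball : ∀ z ∈ ball m₀ r, ‖ψ₁ z‖ < α/3 := fun z hz => mem_ball_zero_iff.1 (hmap hz)
  have hmemz : ∀ z ∈ ball m₀ r, MemLp (fun x : ℝ => Complex.exp (ψ₁ z * x)) 2 μ :=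
    fun z hz => memLp_exp hint hα (hball z hz)
  have hmem : ∀ z ∈ ball m₀ r,
      MemLp (fun x : ℝ => Complex.exp (ψ₁ z * x - k₁ (ψ₁ z))) 2 μ := by
    intro z hz
    have heq : (fun x : ℝ => Complex.exp (ψ₁ z * x - k₁ (ψ₁ z)))
        = fun x : ℝ => Complex.exp (-k₁ (ψ₁ z)) * Complex.exp (ψ₁ z * x) := by
      funext x
      rw [← Complex.exp_add]
      ring_nf
    rw [heq]
    exact (hmemz z hz).const_mul _
  refine ⟨hmem, fun z => Complex.exp (-k₁ (ψ₁ z)) • expL2 μ (ψ₁ z), ?_, ?_⟩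
  · intro z hz
    have e1 : expL2 μ (ψ₁ z) = (hmemz z hz).toLp _ := dif_pos (hmemz z hz)
    show (((Complex.exp (-k₁ (ψ₁ z)) • expL2 μ (ψ₁ z)) : Lp ℂ 2 μ) : ℝ → ℂ)
        =ᵐ[μ] fun x : ℝ => Complex.exp (ψ₁ z * x - k₁ (ψ₁ z))
    rw [e1]
    filter_upwards [Lp.coeFn_smul (Complex.exp (-k₁ (ψ₁ z))) ((hmemz z hz).toLp _),
      (hmemz z hz).coeFn_toLp] with x a1 a2
    rw [a1, Pi.smul_apply, a2, smul_eq_mul, ← Complex.exp_add]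
    ring_nf
  · intro z hz
    have hψz : DifferentiableAt ℂ ψ₁ z := hψ₁.differentiableAt (isOpen_ball.mem_nhds hz)
    have hkz : DifferentiableAt ℂ k₁ (ψ₁ z) :=
      hk₁.differentiableAt (isOpen_ball.mem_nhds (hmap hz))
    have hc : DifferentiableAt ℂ (fun z => Complex.exp (-k₁ (ψ₁ z))) z :=
      ((hkz.comp z hψz).neg).cexp
    have hE : DifferentiableAt ℂ (fun z => expL2 μ (ψ₁ z)) z :=
      (differentiableAt_expL2 hint hα (hball z hz)).comp z hψz
    exact (hc.smul hE).differentiableWithinAt
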